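/- (A priori estimate for solutions of the Volterra integral equation) Let 0 < α ≤ 1, ψ increasing C¹ on I = [a,b], 0 ≤ N < 1 a constant, r continuous nonnegative on {(t,σ) : a ≤ σ ≤ t ≤ b} with t ↦ r(t,t) nondecreasing and r(t,σ) ≤ r(t,t). Suppose f, k are continuous with |f(t,u,v)−f(t,ū,v̄)| ≤ N(|u−ū|+|v−v̄|) and |k(t,σ,u)−k(t,σ,v)| ≤ r(t,σ)|u−v|, and C₁ = sup_{t∈I} |f(t, 0, (1/Γ(α))∫_a^t ψ'(σ)(ψ(t)−ψ(σ))^{α−1} k(t,σ,0)dσ)| < ∞. If x : I → ℝ is a continuous solution of x(t) = f(t, x(t), (1/Γ(α))∫_a^t ψ'(σ)(ψ(t)−ψ(σ))^{α−1} k(t,σ,x(σ))dσ), then |x(t)| ≤ (C₁/(1−N)) · E_α( (N/(1−N)) r(t,t) (ψ(t)−ψ(a))^α ) for all t ∈ I. -/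

import Mathlib

open MeasureTheory Set

/-- One-parameter Mittag-Leffler function `E_α(z) = ∑ z^k / Γ(αk+1)`. -/
noncomputable def ML (α z : ℝ) : ℝ := ∑' k : ℕ, z ^ k / Real.Gamma (α * k + 1)

/-- The inner Volterra integral operator (scalar version). -/
noncomputable def volterraK (α : ℝ) (ψ : ℝ → ℝ) (a : ℝ)
    (k : ℝ → ℝ → ℝ → ℝ) (x : ℝ → ℝ) (t : ℝ) : ℝ :=
  (Real.Gamma α)⁻¹ * ∫ σ in a..t, deriv ψ σ * (ψ t - ψ σ) ^ (α - 1) * k t σ (x σ)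

lemma gamma_lb {x T : ℝ} (hx : 1 ≤ x) (hT : 1 ≤ T) :
    Real.exp (-(T + 1)) * T ^ (x - 1) ≤ Real.Gamma x := by
  have hx0 : 0 < x := lt_of_lt_of_le one_pos hx
  have hT0 : 0 < T := lt_of_lt_of_le one_pos hT
  rw [Real.Gamma_eq_integral hx0]
  have hint : IntegrableOn (fun t : ℝ => Real.exp (-t) * t ^ (x - 1)) (Ioi 0) :=
    Real.GammaIntegral_convergent hx0
  have hsub : Ioc T (T + 1) ⊆ Ioi (0:ℝ) := fun t ht => lt_of_lt_of_le hT0 ht.1.le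
  have h1 : Real.exp (-(T + 1)) * T ^ (x - 1)
      ≤ ∫ t in Ioc T (T + 1), Real.exp (-t) * t ^ (x - 1) := by
    have hvol : (volume (Ioc T (T + 1))).toReal = 1 := by
      rw [Real.volume_Ioc]
      norm_num
    have hconst : ∫ _t in Ioc T (T + 1), Real.exp (-(T + 1)) * T ^ (x - 1)
        = Real.exp (-(T + 1)) * T ^ (x - 1) := by
      rw [setIntegral_const, measureReal_def, hvol, one_smul]
    rw [← hconst]
    apply setIntegral_mono_on
    · exact integrableOn_const (by rw [Real.volume_Ioc]; exact ENNReal.ofReal_ne_top)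
    · exact hint.mono_set hsub
    · exact measurableSet_Ioc
    · intro t ht
      have h2 : Real.exp (-(T + 1)) ≤ Real.exp (-t) :=
        Real.exp_le_exp.2 (by linarith [ht.2])
      have h3 : T ^ (x - 1) ≤ t ^ (x - 1) :=
        Real.rpow_le_rpow hT0.le ht.1.le (by linarith)
      exact mul_le_mul h2 h3 (Real.rpow_nonneg hT0.le _) (Real.exp_pos _).le
  refine h1.trans (setIntegral_mono_set hint ?_ (HasSubset.Subset.eventuallyLE hsub))
  filter_upwards [ae_restrict_mem measurableSet_Ioi] with t ht
  exact mul_nonneg (Real.exp_pos _).le (Real.rpow_nonneg (le_of_lt ht) _)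

lemma ML_summable {α z : ℝ} (hα : 0 < α) (hz : 0 ≤ z) :
    Summable (fun k : ℕ => z ^ k / Real.Gamma (α * k + 1)) := by
  set T : ℝ := (2 * z + 2) ^ (1 / α) with hTdef
  have hT1 : (1:ℝ) ≤ T := by
    have h := Real.rpow_le_rpow (by norm_num : (0:ℝ) ≤ 1)
      (by linarith : (1:ℝ) ≤ 2 * z + 2) (by positivity : (0:ℝ) ≤ 1 / α)
    rwa [Real.one_rpow] at h
  have hT0 : (0:ℝ) < T := lt_of_lt_of_le one_pos hT1
  have hTα : T ^ α = 2 * z + 2 := by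
    rw [hTdef, ← Real.rpow_mul (by linarith), one_div_mul_cancel hα.ne', Real.rpow_one]
  have hgeo : Summable (fun k : ℕ => Real.exp (T + 1) * (1/2) ^ k) :=
    (summable_geometric_of_lt_one (by norm_num) (by norm_num)).mul_left _
  refine Summable.of_nonneg_of_le (fun k => div_nonneg (pow_nonneg hz k) (Real.Gamma_pos_of_pos (by positivity)).le) (fun k => ?_) hgeo
  have hΓ : Real.exp (-(T + 1)) * (2 * z + 2) ^ k ≤ Real.Gamma (α * k + 1) := by
    have := gamma_lb (x := α * k + 1) (T := T) (le_add_of_nonneg_left (by positivity)) hT1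
    have he : T ^ (α * (k:ℝ) + 1 - 1) = (2 * z + 2) ^ k := by
      rw [show α * (k:ℝ) + 1 - 1 = α * k by ring, Real.rpow_mul hT0.le, hTα,
        Real.rpow_natCast]
    rwa [he] at this
  have hpos : (0:ℝ) < Real.exp (-(T + 1)) * (2 * z + 2) ^ k := by positivity
  calc z ^ k / Real.Gamma (α * k + 1)
      ≤ z ^ k / (Real.exp (-(T + 1)) * (2 * z + 2) ^ k) :=
        div_le_div_of_nonneg_left (by positivity) hpos hΓ
    _ = Real.exp (T + 1) * (z / (2 * z + 2)) ^ k := by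
        rw [div_pow, Real.exp_neg]
        field_simp
    _ ≤ Real.exp (T + 1) * (1/2) ^ k := by
        have : z / (2 * z + 2) ≤ 1/2 := by
          rw [div_le_div_iff₀ (by linarith) (by norm_num)]
          linarith
        exact mul_le_mul_of_nonneg_left
          (pow_le_pow_left₀ (by positivity) this k) (Real.exp_pos _).le

lemma beta_aux {α β : ℝ} (hα : 0 < α) (hβ : 0 ≤ β) :
    ∫ y in (0:ℝ)..1, y ^ β * (1 - y) ^ (α - 1)
      = Real.Gamma (β + 1) * Real.Gamma α / Real.Gamma (β + 1 + α) := by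
  have h := Complex.Gamma_mul_Gamma_eq_betaIntegral
    (s := ((β + 1 : ℝ) : ℂ)) (t := ((α : ℝ) : ℂ)) (by simp; linarith) (by simpa using hα)
  have hbeta : Complex.betaIntegral ((β + 1 : ℝ) : ℂ) ((α : ℝ) : ℂ)
      = ((∫ y in (0:ℝ)..1, y ^ β * (1 - y) ^ (α - 1) : ℝ) : ℂ) := by
    rw [Complex.betaIntegral, ← intervalIntegral.integral_ofReal]
    apply intervalIntegral.integral_congr
    intro y hy
    rw [uIcc_of_le (by norm_num : (0:ℝ) ≤ 1)] at hy
    have h1 : ((y ^ β : ℝ) : ℂ) = (y : ℂ) ^ (((β + 1 : ℝ) : ℂ) - 1) := by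
      rw [Complex.ofReal_cpow hy.1]
      norm_num
    have h2 : (((1 - y) ^ (α - 1) : ℝ) : ℂ) = (1 - (y : ℂ)) ^ (((α : ℝ) : ℂ) - 1) := by
      rw [Complex.ofReal_cpow (by linarith [hy.2] : (0:ℝ) ≤ 1 - y)]
      push_cast
      norm_num
    push_cast
    push_cast at h1 h2
    rw [h1, h2]
  rw [hbeta] at h
  have hsum : (((β + 1 : ℝ) : ℂ) + ((α : ℝ) : ℂ)) = ((β + 1 + α : ℝ) : ℂ) := by push_cast; ring
  rw [hsum, Complex.Gamma_ofReal, Complex.Gamma_ofReal, Complex.Gamma_ofReal] at h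
  have h' : Real.Gamma (β + 1) * Real.Gamma α
      = Real.Gamma (β + 1 + α) * ∫ y in (0:ℝ)..1, y ^ β * (1 - y) ^ (α - 1) := by
    exact_mod_cast h
  have hΓ : (0:ℝ) < Real.Gamma (β + 1 + α) := Real.Gamma_pos_of_pos (by linarith)
  field_simp [hΓ.ne'] at h' ⊢
  linarith [h']

lemma beta_intable {α β : ℝ} (hα : 0 < α) (hβ : 0 ≤ β) (c d : ℝ) :
    IntervalIntegrable (fun τ => (d - τ) ^ (α - 1) * (τ - c) ^ β) volume c d := by
  have h1 : IntervalIntegrable (fun y : ℝ => y ^ (α - 1)) volume 0 (d - c) :=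
    intervalIntegral.intervalIntegrable_rpow' (by linarith)
  have h2 := h1.comp_sub_left d
  simp only [sub_sub_cancel, sub_zero] at h2
  have hcont : ContinuousOn (fun τ : ℝ => (τ - c) ^ β) (uIcc d c) :=
    ((continuous_sub_right c).continuousOn).rpow_const (fun x _ => Or.inr hβ)
  exact (h2.mul_continuousOn hcont).symm

lemma beta_shift {α β c d : ℝ} (hα : 0 < α) (hβ : 0 ≤ β) (hcd : c ≤ d) :
    ∫ τ in Ioo c d, (d - τ) ^ (α - 1) * (τ - c) ^ β
      = Real.Gamma α * Real.Gamma (β + 1) / Real.Gamma (α + β + 1) * (d - c) ^ (α + β) := by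
  rcases eq_or_lt_of_le hcd with rfl | hlt
  · simp [Real.zero_rpow (by positivity : α + β ≠ 0)]
  have hL : (0:ℝ) < d - c := by linarith
  rw [← integral_Ioc_eq_integral_Ioo, ← intervalIntegral.integral_of_le hcd]
  have step1 : (∫ τ in c..d, (d - τ) ^ (α - 1) * (τ - c) ^ β)
      = ∫ y in (0:ℝ)..(d - c), (d - (y + c)) ^ (α - 1) * ((y + c) - c) ^ β := by
    rw [intervalIntegral.integral_comp_add_right (fun τ => (d - τ) ^ (α - 1) * (τ - c) ^ β) c]
    norm_num
  rw [step1]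
  have step2 : (∫ y in (0:ℝ)..(d - c), (d - (y + c)) ^ (α - 1) * ((y + c) - c) ^ β)
      = (d - c) • ∫ t in (0:ℝ)..1, (d - ((d - c) * t + c)) ^ (α - 1)
          * (((d - c) * t + c) - c) ^ β := by
    rw [intervalIntegral.smul_integral_comp_mul_left
      (fun y => (d - (y + c)) ^ (α - 1) * ((y + c) - c) ^ β) (d - c)]
    norm_num
  rw [step2]
  have step3 : (∫ t in (0:ℝ)..1, (d - ((d - c) * t + c)) ^ (α - 1)
          * (((d - c) * t + c) - c) ^ β)
      = (d - c) ^ (α - 1) * (d - c) ^ β * ∫ t in (0:ℝ)..1, t ^ β * (1 - t) ^ (α - 1) := by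
    rw [← intervalIntegral.integral_const_mul]
    apply intervalIntegral.integral_congr
    intro t ht
    rw [uIcc_of_le (by norm_num : (0:ℝ) ≤ 1)] at ht
    dsimp only
    have e1 : d - ((d - c) * t + c) = (d - c) * (1 - t) := by ring
    have e2 : (d - c) * t + c - c = (d - c) * t := by ring
    rw [e1, e2, Real.mul_rpow hL.le (by linarith [ht.2]), Real.mul_rpow hL.le ht.1]
    ring
  rw [step3, beta_aux hα hβ]
  have hrp : (d - c) ^ (α + β) = (d - c) * ((d - c) ^ (α - 1) * (d - c) ^ β) := by
    rw [show α + β = 1 + (α - 1) + β by ring, Real.rpow_add hL, Real.rpow_add hL,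
      Real.rpow_one]
    ring
  rw [hrp, show Real.Gamma (α + β + 1) = Real.Gamma (β + 1 + α) by ring_nf]
  simp only [smul_eq_mul]
  ring

section CoV
variable {a b s α : ℝ} {ψ : ℝ → ℝ}

lemma psi_hasDerivAt (hψ : ContDiffOn ℝ 1 ψ (Icc a b)) {σ : ℝ} (hσ : σ ∈ Ioo a b) :
    HasDerivAt ψ (deriv ψ σ) σ := by
  have h1 : DifferentiableOn ℝ ψ (Icc a b) := hψ.differentiableOn one_ne_zero
  have h2 : DifferentiableAt ℝ ψ σ :=
    (h1 σ ⟨hσ.1.le, hσ.2.le⟩).differentiableAt (Icc_mem_nhds hσ.1 hσ.2)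
  exact h2.hasDerivAt

lemma psi_deriv_nonneg (hmono : StrictMonoOn ψ (Icc a b))
    (hψ : ContDiffOn ℝ 1 ψ (Icc a b)) {σ : ℝ} (hσ : σ ∈ Ioo a b) :
    0 ≤ deriv ψ σ := by
  have hd := (psi_hasDerivAt hψ hσ)
  rw [hasDerivAt_iff_tendsto_slope] at hd
  have hd' : Filter.Tendsto (slope ψ σ) (nhdsWithin σ (Ioi σ)) (nhds (deriv ψ σ)) :=
    hd.mono_left (nhdsWithin_mono σ (fun y hy => ne_of_gt hy))
  refine ge_of_tendsto hd' ?_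
  filter_upwards [Ioc_mem_nhdsGT_of_mem ⟨le_rfl, hσ.2⟩] with y hy
  have h1 : ψ σ ≤ ψ y :=
    (hmono ⟨hσ.1.le, hσ.2.le⟩ ⟨hσ.1.le.trans hy.1.le, hy.2⟩ hy.1).le
  rw [slope_def_field]
  exact div_nonneg (by linarith) (by linarith [hy.1])

lemma psi_image (hmono : StrictMonoOn ψ (Icc a b)) (hψc : ContinuousOn ψ (Icc a b))
    (has : a ≤ s) (hsb : s ≤ b) : ψ '' Ioo a s = Ioo (ψ a) (ψ s) := by
  have hsub : Icc a s ⊆ Icc a b := Icc_subset_Icc le_rfl hsb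
  apply Subset.antisymm
  · rintro τ ⟨σ, hσ, rfl⟩
    have hσm : σ ∈ Icc a b := hsub ⟨hσ.1.le, hσ.2.le⟩
    exact ⟨hmono (hsub ⟨le_rfl, has⟩) hσm hσ.1,
      hmono hσm (hsub ⟨has, le_rfl⟩) hσ.2⟩
  · exact intermediate_value_Ioo has (hψc.mono hsub)

lemma cov_eq (hmono : StrictMonoOn ψ (Icc a b)) (hψ : ContDiffOn ℝ 1 ψ (Icc a b))
    (has : a ≤ s) (hsb : s ≤ b) (g : ℝ → ℝ) :
    (∫ σ in Ioo a s, deriv ψ σ * g (ψ σ)) = ∫ τ in Ioo (ψ a) (ψ s), g τ := by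
  have hIoosub : Ioo a s ⊆ Ioo a b := Ioo_subset_Ioo le_rfl hsb
  have hder : ∀ σ ∈ Ioo a s, HasDerivWithinAt ψ (deriv ψ σ) (Ioo a s) σ :=
    fun σ hσ => (psi_hasDerivAt hψ (hIoosub hσ)).hasDerivWithinAt
  have hinj : InjOn ψ (Ioo a s) :=
    (hmono.injOn).mono ((Ioo_subset_Icc_self).trans (Icc_subset_Icc le_rfl hsb))
  have h := integral_image_eq_integral_abs_deriv_smul measurableSet_Ioo hder hinj g
  rw [psi_image hmono (hψ.continuousOn) has hsb] at h
  rw [h]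
  apply setIntegral_congr_fun measurableSet_Ioo
  intro σ hσ
  dsimp only
  rw [abs_of_nonneg (psi_deriv_nonneg hmono hψ (hIoosub hσ))]
  simp [smul_eq_mul]

lemma cov_integrable (hmono : StrictMonoOn ψ (Icc a b)) (hψ : ContDiffOn ℝ 1 ψ (Icc a b))
    (has : a ≤ s) (hsb : s ≤ b) (g : ℝ → ℝ)
    (hg : IntegrableOn g (Ioo (ψ a) (ψ s))) :
    IntegrableOn (fun σ => deriv ψ σ * g (ψ σ)) (Ioo a s) := by
  have hIoosub : Ioo a s ⊆ Ioo a b := Ioo_subset_Ioo le_rfl hsb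
  have hder : ∀ σ ∈ Ioo a s, HasDerivWithinAt ψ (deriv ψ σ) (Ioo a s) σ :=
    fun σ hσ => (psi_hasDerivAt hψ (hIoosub hσ)).hasDerivWithinAt
  have hinj : InjOn ψ (Ioo a s) :=
    (hmono.injOn).mono ((Ioo_subset_Icc_self).trans (Icc_subset_Icc le_rfl hsb))
  have h := (integrableOn_image_iff_integrableOn_abs_deriv_smul measurableSet_Ioo hder
    hinj g).1 (by rwa [psi_image hmono (hψ.continuousOn) has hsb])
  apply h.congr_fun ?_ measurableSet_Ioo
  intro σ hσ
  dsimp only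
  rw [abs_of_nonneg (psi_deriv_nonneg hmono hψ (hIoosub hσ))]
  simp [smul_eq_mul]

lemma frac_pow (hα : 0 < α) {β : ℝ} (hβ : 0 ≤ β)
    (hmono : StrictMonoOn ψ (Icc a b)) (hψ : ContDiffOn ℝ 1 ψ (Icc a b))
    (has : a ≤ s) (hsb : s ≤ b) :
    ∫ σ in Ioo a s, deriv ψ σ * ((ψ s - ψ σ) ^ (α - 1) * (ψ σ - ψ a) ^ β)
      = Real.Gamma α * Real.Gamma (β + 1) / Real.Gamma (α + β + 1)
        * (ψ s - ψ a) ^ (α + β) := by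
  have hψab : ψ a ≤ ψ s := by
    rcases eq_or_lt_of_le has with rfl | h
    · exact le_rfl
    · exact (hmono ⟨le_rfl, has.trans hsb⟩ ⟨has, hsb⟩ h).le
  have h1 := cov_eq hmono hψ has hsb (fun τ => (ψ s - τ) ^ (α - 1) * (τ - ψ a) ^ β)
  rw [h1]
  exact beta_shift hα hβ hψab
end CoV
section Fint
open MeasureTheory Set
variable {a b s α : ℝ} {ψ : ℝ → ℝ}

lemma F_integrable (hα : 0 < α)
    (hmono : StrictMonoOn ψ (Icc a b)) (hψ : ContDiffOn ℝ 1 ψ (Icc a b))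
    (has : a ≤ s) (hsb : s ≤ b) {w : ℝ → ℝ} (hw : ContinuousOn w (Icc a s)) :
    IntegrableOn (fun σ => deriv ψ σ * (ψ s - ψ σ) ^ (α - 1) * w σ) (Ioo a s) := by
  have hIoosub : Ioo a s ⊆ Ioo a b := Ioo_subset_Ioo le_rfl hsb
  have hψab : ψ a ≤ ψ s := by
    rcases eq_or_lt_of_le has with rfl | h
    · exact le_rfl
    · exact (hmono ⟨le_rfl, has.trans hsb⟩ ⟨has, hsb⟩ h).le
  -- integrability of the pure kernel
  have hker : IntegrableOn (fun σ => deriv ψ σ * (ψ s - ψ σ) ^ (α - 1)) (Ioo a s) := by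
    have hg : IntegrableOn (fun τ => (ψ s - τ) ^ (α - 1)) (Ioo (ψ a) (ψ s)) := by
      have h1 := (beta_intable hα le_rfl (ψ a) (ψ s)).1
      have h2 : IntegrableOn (fun τ => (ψ s - τ) ^ (α - 1) * (τ - ψ a) ^ (0:ℝ))
          (Ioo (ψ a) (ψ s)) := h1.mono_set Ioo_subset_Ioc_self
      exact h2.congr_fun (fun τ _ => by dsimp only; rw [Real.rpow_zero, mul_one]) measurableSet_Ioo
    exact cov_integrable hmono hψ has hsb (fun τ => (ψ s - τ) ^ (α - 1)) hg
  obtain ⟨Mw, hMw⟩ := isCompact_Icc.exists_bound_of_continuousOn hw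
  have hMw0 : 0 ≤ Mw := by
    rcases eq_or_lt_of_le has with rfl | h
    · exact le_trans (norm_nonneg (w a)) (hMw a ⟨le_rfl, le_rfl⟩)
    · exact le_trans (norm_nonneg (w a)) (hMw a ⟨le_rfl, has⟩)
  refine Integrable.mono' (hker.const_mul Mw) ?_ ?_
  · -- a.e. strong measurability
    have hc1 : ContinuousOn (fun σ => (ψ s - ψ σ) ^ (α - 1)) (Ioo a s) := by
      apply ContinuousOn.rpow_const
      · exact (continuousOn_const.sub ((hψ.continuousOn).mono
          ((Ioo_subset_Icc_self).trans (Icc_subset_Icc le_rfl hsb))))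
      · intro σ hσ
        left
        have : ψ σ < ψ s := hmono ⟨hσ.1.le, hσ.2.le.trans hsb⟩ ⟨has, hsb⟩ hσ.2
        exact ne_of_gt (by linarith)
    have hc2 : ContinuousOn w (Ioo a s) := hw.mono Ioo_subset_Icc_self
    exact (((measurable_deriv ψ).aestronglyMeasurable).mul
      ((hc1.aestronglyMeasurable measurableSet_Ioo))).mul
        (hc2.aestronglyMeasurable measurableSet_Ioo)
  · rw [ae_restrict_iff' measurableSet_Ioo]
    apply Filter.Eventually.of_forall
    intro σ hσ
    have h1 : 0 ≤ deriv ψ σ := psi_deriv_nonneg hmono hψ (hIoosub hσ)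
    have h2 : 0 ≤ (ψ s - ψ σ) ^ (α - 1) := Real.rpow_nonneg
      (by
        have : ψ σ < ψ s := hmono ⟨hσ.1.le, hσ.2.le.trans hsb⟩ ⟨has, hsb⟩ hσ.2
        linarith) _
    have h3 : |w σ| ≤ Mw := hMw σ ⟨hσ.1.le, hσ.2.le⟩
    calc ‖deriv ψ σ * (ψ s - ψ σ) ^ (α - 1) * w σ‖
        = deriv ψ σ * (ψ s - ψ σ) ^ (α - 1) * |w σ| := by
          rw [Real.norm_eq_abs, abs_mul, abs_mul, abs_of_nonneg h1, abs_of_nonneg h2]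
      _ ≤ deriv ψ σ * (ψ s - ψ σ) ^ (α - 1) * Mw := by
          exact mul_le_mul_of_nonneg_left h3 (mul_nonneg h1 h2)
      _ = Mw * (deriv ψ σ * (ψ s - ψ σ) ^ (α - 1)) := by ring

end Fint
section Gronwall
open MeasureTheory Set Filter

lemma gronwall_ML {a b α A c M : ℝ} {ψ u : ℝ → ℝ}
    (hα0 : 0 < α) (hab : a ≤ b)
    (hmono : StrictMonoOn ψ (Icc a b)) (hψ : ContDiffOn ℝ 1 ψ (Icc a b))
    (hA : 0 ≤ A) (hc : 0 ≤ c)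
    (hu : ContinuousOn u (Icc a b)) (hu0 : ∀ s ∈ Icc a b, 0 ≤ u s)
    (hM : ∀ s ∈ Icc a b, u s ≤ M)
    (key : ∀ s ∈ Icc a b, u s ≤ A + c * (Real.Gamma α)⁻¹ *
      ∫ σ in Ioo a s, deriv ψ σ * (ψ s - ψ σ) ^ (α - 1) * u σ) :
    u b ≤ A * ML α (c * (ψ b - ψ a) ^ α) := by
  have hΓα : (0:ℝ) < Real.Gamma α := Real.Gamma_pos_of_pos hα0
  set q : ℕ → ℝ → ℝ :=
    fun k σ => c ^ k / Real.Gamma (α * k + 1) * (ψ σ - ψ a) ^ (α * k) with hq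
  have hq0 : ∀ σ, q 0 σ = 1 := by
    intro σ
    simp [hq, Real.Gamma_one]
  have hqcont : ∀ k, ContinuousOn (q k) (Icc a b) := by
    intro k
    apply continuousOn_const.mul
    exact ((hψ.continuousOn).sub continuousOn_const).rpow_const
      (fun σ _ => Or.inr (by positivity))
  -- the key integral computation
  have hJq : ∀ (k : ℕ), ∀ s ∈ Icc a b,
      c * (Real.Gamma α)⁻¹ *
        (∫ σ in Ioo a s, deriv ψ σ * (ψ s - ψ σ) ^ (α - 1) * q k σ) = q (k + 1) s := by
    intro k s hs
    have h1 : (fun σ => deriv ψ σ * (ψ s - ψ σ) ^ (α - 1) * q k σ)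
        = fun σ => (c ^ k / Real.Gamma (α * k + 1)) *
            (deriv ψ σ * ((ψ s - ψ σ) ^ (α - 1) * (ψ σ - ψ a) ^ (α * k))) := by
      funext σ
      simp only [hq]
      ring
    rw [h1, MeasureTheory.integral_const_mul,
      frac_pow hα0 (by positivity : (0:ℝ) ≤ α * k) hmono hψ hs.1 hs.2]
    have hΓk : (0:ℝ) < Real.Gamma (α * k + 1) := Real.Gamma_pos_of_pos (by positivity)
    have hΓk1 : (0:ℝ) < Real.Gamma (α + α * k + 1) := Real.Gamma_pos_of_pos (by positivity)
    simp only [hq]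
    push_cast
    rw [show α * ((k:ℝ) + 1) = α + α * k by ring]
    field_simp
    ring
  have hM0 : 0 ≤ M := le_trans (hu0 a ⟨le_rfl, hab⟩) (hM a ⟨le_rfl, hab⟩)
  -- the iteration
  have P : ∀ n : ℕ, ∀ s ∈ Icc a b,
      u s ≤ A * (∑ k ∈ Finset.range n, q k s) + M * q n s := by
    intro n
    induction n with
    | zero =>
      intro s hs
      simpa [hq0 s] using hM s hs
    | succ n ih =>
      intro s hs
      obtain ⟨has, hsb⟩ := hs
      have hFu := F_integrable hα0 hmono hψ has hsb (hu.mono (Icc_subset_Icc le_rfl hsb))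
      have hFq : ∀ k, IntegrableOn
          (fun σ => deriv ψ σ * (ψ s - ψ σ) ^ (α - 1) * q k σ) (Ioo a s) := fun k =>
        F_integrable hα0 hmono hψ has hsb ((hqcont k).mono (Icc_subset_Icc le_rfl hsb))
      have hFsum : IntegrableOn (fun σ =>
          ∑ k ∈ Finset.range n, A * (deriv ψ σ * (ψ s - ψ σ) ^ (α - 1) * q k σ)) (Ioo a s) :=
        integrable_finset_sum _ (fun k _ => (hFq k).const_mul A)
      have hFw : IntegrableOn (fun σ =>
          (∑ k ∈ Finset.range n, A * (deriv ψ σ * (ψ s - ψ σ) ^ (α - 1) * q k σ))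
            + M * (deriv ψ σ * (ψ s - ψ σ) ^ (α - 1) * q n σ)) (Ioo a s) :=
        hFsum.add ((hFq n).const_mul M)
      have hmono_int : (∫ σ in Ioo a s, deriv ψ σ * (ψ s - ψ σ) ^ (α - 1) * u σ)
          ≤ ∫ σ in Ioo a s,
            ((∑ k ∈ Finset.range n, A * (deriv ψ σ * (ψ s - ψ σ) ^ (α - 1) * q k σ))
              + M * (deriv ψ σ * (ψ s - ψ σ) ^ (α - 1) * q n σ)) := by
        apply setIntegral_mono_on hFu hFw measurableSet_Ioo
        intro σ hσ
        have hD : 0 ≤ deriv ψ σ * (ψ s - ψ σ) ^ (α - 1) := by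
          apply mul_nonneg
          · exact psi_deriv_nonneg hmono hψ (Ioo_subset_Ioo le_rfl hsb hσ)
          · exact Real.rpow_nonneg (by
              have : ψ σ < ψ s := hmono ⟨hσ.1.le, hσ.2.le.trans hsb⟩ ⟨has, hsb⟩ hσ.2
              linarith) _
        have hih := ih σ ⟨hσ.1.le, hσ.2.le.trans hsb⟩
        calc deriv ψ σ * (ψ s - ψ σ) ^ (α - 1) * u σ
            ≤ deriv ψ σ * (ψ s - ψ σ) ^ (α - 1)
              * (A * (∑ k ∈ Finset.range n, q k σ) + M * q n σ) :=
              mul_le_mul_of_nonneg_left hih hD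
          _ = (∑ k ∈ Finset.range n,
                A * (deriv ψ σ * (ψ s - ψ σ) ^ (α - 1) * q k σ))
              + M * (deriv ψ σ * (ψ s - ψ σ) ^ (α - 1) * q n σ) := by
              rw [show deriv ψ σ * (ψ s - ψ σ) ^ (α - 1)
                  * (A * (∑ k ∈ Finset.range n, q k σ) + M * q n σ)
                = A * (deriv ψ σ * (ψ s - ψ σ) ^ (α - 1) * (∑ k ∈ Finset.range n, q k σ))
                  + M * (deriv ψ σ * (ψ s - ψ σ) ^ (α - 1) * q n σ) from by ring,
                Finset.mul_sum, Finset.mul_sum]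
      have hintval : (∫ σ in Ioo a s,
            ((∑ k ∈ Finset.range n, A * (deriv ψ σ * (ψ s - ψ σ) ^ (α - 1) * q k σ))
              + M * (deriv ψ σ * (ψ s - ψ σ) ^ (α - 1) * q n σ)))
          = (∑ k ∈ Finset.range n,
              A * ∫ σ in Ioo a s, deriv ψ σ * (ψ s - ψ σ) ^ (α - 1) * q k σ)
            + M * ∫ σ in Ioo a s, deriv ψ σ * (ψ s - ψ σ) ^ (α - 1) * q n σ := by
        rw [MeasureTheory.integral_add hFsum ((hFq n).const_mul M),
          MeasureTheory.integral_finset_sum _ (fun k _ => (hFq k).const_mul A),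
          MeasureTheory.integral_const_mul]
        congr 1
        apply Finset.sum_congr rfl
        intro k _
        rw [MeasureTheory.integral_const_mul]
      have hstep : u s ≤ A + c * (Real.Gamma α)⁻¹ *
          ((∑ k ∈ Finset.range n,
              A * ∫ σ in Ioo a s, deriv ψ σ * (ψ s - ψ σ) ^ (α - 1) * q k σ)
            + M * ∫ σ in Ioo a s, deriv ψ σ * (ψ s - ψ σ) ^ (α - 1) * q n σ) := by
        rw [← hintval]
        refine (key s ⟨has, hsb⟩).trans ?_
        have hcΓ : 0 ≤ c * (Real.Gamma α)⁻¹ := mul_nonneg hc (inv_nonneg.2 hΓα.le)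
        exact add_le_add_right (mul_le_mul_of_nonneg_left hmono_int hcΓ) A
      have hdistrib : c * (Real.Gamma α)⁻¹ *
          ((∑ k ∈ Finset.range n,
              A * ∫ σ in Ioo a s, deriv ψ σ * (ψ s - ψ σ) ^ (α - 1) * q k σ)
            + M * ∫ σ in Ioo a s, deriv ψ σ * (ψ s - ψ σ) ^ (α - 1) * q n σ)
          = A * (∑ k ∈ Finset.range n, q (k + 1) s) + M * q (n + 1) s := by
        rw [mul_add, Finset.mul_sum]
        rw [Finset.sum_congr rfl (fun k (_ : k ∈ Finset.range n) => by
          rw [mul_left_comm, hJq k s ⟨has, hsb⟩]),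
          mul_left_comm, hJq n s ⟨has, hsb⟩, ← Finset.mul_sum]
      rw [hdistrib] at hstep
      have hfin : A * (∑ k ∈ Finset.range (n + 1), q k s) + M * q (n + 1) s
          = A + (A * (∑ k ∈ Finset.range n, q (k + 1) s) + M * q (n + 1) s) := by
        rw [Finset.sum_range_succ', hq0 s]
        ring
      rw [hfin]
      exact hstep
  -- pass to the limit
  have hX0 : 0 ≤ ψ b - ψ a := by
    rcases eq_or_lt_of_le hab with rfl | h
    · simp
    · have := hmono ⟨le_rfl, hab⟩ ⟨hab, le_rfl⟩ h
      linarith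
  have hz0 : 0 ≤ c * (ψ b - ψ a) ^ α := mul_nonneg hc (Real.rpow_nonneg hX0 _)
  have hqb : ∀ k : ℕ, q k b
      = (c * (ψ b - ψ a) ^ α) ^ k / Real.Gamma (α * k + 1) := by
    intro k
    simp only [hq]
    rw [Real.rpow_mul hX0 α (k:ℝ), Real.rpow_natCast, mul_pow]
    ring
  have hsummable := ML_summable hα0 hz0
  have hlim1 : Tendsto (fun n => ∑ k ∈ Finset.range n,
      (c * (ψ b - ψ a) ^ α) ^ k / Real.Gamma (α * k + 1)) atTop
      (nhds (ML α (c * (ψ b - ψ a) ^ α))) := hsummable.hasSum.tendsto_sum_nat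
  have hlim2 : Tendsto (fun n : ℕ =>
      (c * (ψ b - ψ a) ^ α) ^ n / Real.Gamma (α * n + 1)) atTop (nhds 0) :=
    hsummable.tendsto_atTop_zero
  have hlim : Tendsto (fun n : ℕ => A * (∑ k ∈ Finset.range n,
      (c * (ψ b - ψ a) ^ α) ^ k / Real.Gamma (α * k + 1))
      + M * ((c * (ψ b - ψ a) ^ α) ^ n / Real.Gamma (α * n + 1))) atTop
      (nhds (A * ML α (c * (ψ b - ψ a) ^ α) + M * 0)) :=
    (hlim1.const_mul A).add (hlim2.const_mul M)
  rw [mul_zero, add_zero] at hlim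
  refine ge_of_tendsto hlim ?_
  filter_upwards with n
  have := P n b ⟨hab, le_rfl⟩
  simpa only [hqb] using this

end Gronwall
theorem volterra_solution_estimate
    (a b α N C₁ : ℝ) (ψ : ℝ → ℝ) (f : ℝ → ℝ → ℝ → ℝ) (k : ℝ → ℝ → ℝ → ℝ)
    (r : ℝ → ℝ → ℝ) (x : ℝ → ℝ)
    (hα0 : 0 < α) (hα1 : α ≤ 1) (hab : a ≤ b)
    (hmono : StrictMonoOn ψ (Icc a b)) (hC1ψ : ContDiffOn ℝ 1 ψ (Icc a b))
    (hN0 : 0 ≤ N) (hN1 : N < 1)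
    (hf : Continuous fun p : ℝ × ℝ × ℝ => f p.1 p.2.1 p.2.2)
    (hk : Continuous fun p : ℝ × ℝ × ℝ => k p.1 p.2.1 p.2.2)
    (hr : ContinuousOn (fun q : ℝ × ℝ => r q.1 q.2)
      {q : ℝ × ℝ | a ≤ q.2 ∧ q.2 ≤ q.1 ∧ q.1 ≤ b})
    (hr0 : ∀ t σ, a ≤ σ → σ ≤ t → t ≤ b → 0 ≤ r t σ)
    (hrdiagmono : MonotoneOn (fun t => r t t) (Icc a b))
    (hrdiag : ∀ t σ, a ≤ σ → σ ≤ t → t ≤ b → r t σ ≤ r t t)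
    (hfLip : ∀ t u v u' v', |f t u v - f t u' v'| ≤ N * (|u - u'| + |v - v'|))
    (hkLip : ∀ t σ u v, |k t σ u - k t σ v| ≤ r t σ * |u - v|)
    (hC₁ : ∀ t ∈ Icc a b, |f t 0 (volterraK α ψ a k (fun _ => 0) t)| ≤ C₁)
    (hx : ContinuousOn x (Icc a b))
    (hsol : ∀ t ∈ Icc a b, x t = f t (x t) (volterraK α ψ a k x t)) :
    ∀ t ∈ Icc a b,
      |x t| ≤ C₁ / (1 - N) * ML α (N / (1 - N) * r t t * (ψ t - ψ a) ^ α) := by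
  intro t ht
  have h1N : (0:ℝ) < 1 - N := by linarith
  have hC₁0 : 0 ≤ C₁ := le_trans (abs_nonneg _) (hC₁ a ⟨le_rfl, hab⟩)
  have hrtt : 0 ≤ r t t := hr0 t t ht.1 le_rfl ht.2
  have hsubt : Icc a t ⊆ Icc a b := Icc_subset_Icc le_rfl ht.2
  obtain ⟨M, hM⟩ := isCompact_Icc.exists_bound_of_continuousOn (hx.mono hsubt)
  refine gronwall_ML (u := fun s => |x s|) (M := M) hα0 ht.1
    (hmono.mono hsubt) (hC1ψ.mono hsubt)
    (by positivity) (by positivity)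
    ((hx.mono hsubt).abs) (fun s _ => abs_nonneg _)
    (fun s hs => by simpa using hM s hs) ?_
  -- the a priori inequality
  intro s hs
  have has : a ≤ s := hs.1
  have hst : s ≤ t := hs.2
  have hsb : s ≤ b := hst.trans ht.2
  have hsab : s ∈ Icc a b := ⟨has, hsb⟩
  -- continuity of the various integrand factors
  have hw1 : ContinuousOn (fun σ => k s σ (x σ)) (Icc a s) := by
    have : ContinuousOn (fun σ : ℝ => ((s, σ, x σ) : ℝ × ℝ × ℝ)) (Icc a s) :=
      continuousOn_const.prodMk (continuousOn_id.prodMk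
        (hx.mono (Icc_subset_Icc le_rfl hsb)))
    exact hk.comp_continuousOn this
  have hw2 : ContinuousOn (fun σ => k s σ 0) (Icc a s) := by
    have : ContinuousOn (fun σ : ℝ => ((s, σ, (0:ℝ)) : ℝ × ℝ × ℝ)) (Icc a s) :=
      continuousOn_const.prodMk (continuousOn_id.prodMk continuousOn_const)
    exact hk.comp_continuousOn this
  have hw3 : ContinuousOn (fun σ => r t t * |x σ|) (Icc a s) :=
    continuousOn_const.mul ((hx.mono (Icc_subset_Icc le_rfl hsb)).abs)
  have hI1 : IntegrableOn (fun σ => deriv ψ σ * (ψ s - ψ σ) ^ (α - 1) * k s σ (x σ))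
      (Ioo a s) := F_integrable hα0 hmono hC1ψ has hsb hw1
  have hI2 : IntegrableOn (fun σ => deriv ψ σ * (ψ s - ψ σ) ^ (α - 1) * k s σ 0)
      (Ioo a s) := F_integrable hα0 hmono hC1ψ has hsb hw2
  have hI3 : IntegrableOn
      (fun σ => deriv ψ σ * (ψ s - ψ σ) ^ (α - 1) * (r t t * |x σ|))
      (Ioo a s) := F_integrable hα0 hmono hC1ψ has hsb hw3
  have hIu : IntegrableOn (fun σ => deriv ψ σ * (ψ s - ψ σ) ^ (α - 1) * |x σ|)
      (Ioo a s) :=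
    F_integrable hα0 hmono hC1ψ has hsb ((hx.mono (Icc_subset_Icc le_rfl hsb)).abs)
  set Jx := ∫ σ in Ioo a s, deriv ψ σ * (ψ s - ψ σ) ^ (α - 1) * |x σ| with hJx
  have hDnn : ∀ σ ∈ Ioo a s, 0 ≤ deriv ψ σ * (ψ s - ψ σ) ^ (α - 1) := by
    intro σ hσ
    apply mul_nonneg
    · exact psi_deriv_nonneg hmono hC1ψ (Ioo_subset_Ioo le_rfl hsb hσ)
    · refine Real.rpow_nonneg ?_ _
      have : ψ σ < ψ s := hmono ⟨hσ.1.le, hσ.2.le.trans hsb⟩ hsab hσ.2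
      linarith
  have hJx0 : 0 ≤ Jx := setIntegral_nonneg measurableSet_Ioo
    (fun σ hσ => mul_nonneg (hDnn σ hσ) (abs_nonneg _))
  -- bound on the difference of the two Volterra operators
  have hKdiff : |volterraK α ψ a k x s - volterraK α ψ a k (fun _ => 0) s|
      ≤ (Real.Gamma α)⁻¹ * (r t t * Jx) := by
    have hΓ : (0:ℝ) < Real.Gamma α := Real.Gamma_pos_of_pos hα0
    have hrw : ∀ (y : ℝ → ℝ),
        volterraK α ψ a k y s = (Real.Gamma α)⁻¹ *
          ∫ σ in Ioo a s, deriv ψ σ * (ψ s - ψ σ) ^ (α - 1) * k s σ (y σ) := by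
      intro y
      rw [volterraK, intervalIntegral.integral_of_le has, integral_Ioc_eq_integral_Ioo]
    rw [hrw x, hrw (fun _ => 0), ← mul_sub,
      ← MeasureTheory.integral_sub hI1 hI2, abs_mul,
      abs_of_nonneg (inv_nonneg.2 hΓ.le)]
    apply mul_le_mul_of_nonneg_left ?_ (inv_nonneg.2 hΓ.le)
    have habs1 : |∫ σ in Ioo a s, (deriv ψ σ * (ψ s - ψ σ) ^ (α - 1) * k s σ (x σ)
            - deriv ψ σ * (ψ s - ψ σ) ^ (α - 1) * k s σ 0)|
        ≤ ∫ σ in Ioo a s, |deriv ψ σ * (ψ s - ψ σ) ^ (α - 1) * k s σ (x σ)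
            - deriv ψ σ * (ψ s - ψ σ) ^ (α - 1) * k s σ 0| := by
      have h := MeasureTheory.norm_integral_le_integral_norm
        (μ := volume.restrict (Ioo a s))
        (fun σ => deriv ψ σ * (ψ s - ψ σ) ^ (α - 1) * k s σ (x σ)
          - deriv ψ σ * (ψ s - ψ σ) ^ (α - 1) * k s σ 0)
      simpa [Real.norm_eq_abs] using h
    have habs2 : (∫ σ in Ioo a s, |deriv ψ σ * (ψ s - ψ σ) ^ (α - 1) * k s σ (x σ)
            - deriv ψ σ * (ψ s - ψ σ) ^ (α - 1) * k s σ 0|)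
        ≤ ∫ σ in Ioo a s, deriv ψ σ * (ψ s - ψ σ) ^ (α - 1) * (r t t * |x σ|) := by
      apply setIntegral_mono_on ((hI1.sub hI2).abs) hI3 measurableSet_Ioo
      intro σ hσ
      have hD := hDnn σ hσ
      have hklip := hkLip s σ (x σ) 0
      have hrs : r s σ ≤ r t t := by
        have h1 : r s σ ≤ r s s := hrdiag s σ hσ.1.le hσ.2.le hsb
        have h2 : r s s ≤ r t t := hrdiagmono hsab ht hst
        linarith
      calc |deriv ψ σ * (ψ s - ψ σ) ^ (α - 1) * k s σ (x σ)
            - deriv ψ σ * (ψ s - ψ σ) ^ (α - 1) * k s σ 0|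
          = deriv ψ σ * (ψ s - ψ σ) ^ (α - 1) * |k s σ (x σ) - k s σ 0| := by
            rw [← mul_sub, abs_mul, abs_of_nonneg hD]
        _ ≤ deriv ψ σ * (ψ s - ψ σ) ^ (α - 1) * (r s σ * |x σ|) := by
            refine mul_le_mul_of_nonneg_left ?_ hD
            simpa using hklip
        _ ≤ deriv ψ σ * (ψ s - ψ σ) ^ (α - 1) * (r t t * |x σ|) :=
            mul_le_mul_of_nonneg_left
              (mul_le_mul_of_nonneg_right hrs (abs_nonneg _)) hD
    have habs3 : (∫ σ in Ioo a s, deriv ψ σ * (ψ s - ψ σ) ^ (α - 1) * (r t t * |x σ|))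
        = r t t * Jx := by
      rw [hJx, ← MeasureTheory.integral_const_mul]
      apply setIntegral_congr_fun measurableSet_Ioo
      intro σ _
      ring
    exact (habs1.trans habs2).trans (le_of_eq habs3)
  -- assemble the pointwise inequality
  have hfs := hsol s hsab
  have hlip := hfLip s (x s) (volterraK α ψ a k x s) 0 (volterraK α ψ a k (fun _ => 0) s)
  have hCb := hC₁ s hsab
  have habs : |x s| ≤ |f s (x s) (volterraK α ψ a k x s)
      - f s 0 (volterraK α ψ a k (fun _ => 0) s)|
      + |f s 0 (volterraK α ψ a k (fun _ => 0) s)| := by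
    have h := abs_add_le (f s (x s) (volterraK α ψ a k x s)
      - f s 0 (volterraK α ψ a k (fun _ => 0) s))
      (f s 0 (volterraK α ψ a k (fun _ => 0) s))
    rw [sub_add_cancel] at h
    nth_rewrite 1 [hfs]
    exact h
  have hmain : |x s| ≤ N * (|x s| + (Real.Gamma α)⁻¹ * (r t t * Jx)) + C₁ := by
    have h2 : |x s - 0| = |x s| := by rw [sub_zero]
    calc |x s| ≤ _ + _ := habs
      _ ≤ N * (|x s - 0| + |volterraK α ψ a k x s
            - volterraK α ψ a k (fun _ => 0) s|) + C₁ := add_le_add hlip hCb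
      _ ≤ N * (|x s| + (Real.Gamma α)⁻¹ * (r t t * Jx)) + C₁ := by
          rw [h2]
          exact add_le_add_left (mul_le_mul_of_nonneg_left
            (add_le_add_right hKdiff _) hN0) C₁
  have hΓinv : 0 ≤ (Real.Gamma α)⁻¹ := inv_nonneg.2 (Real.Gamma_pos_of_pos hα0).le
  have hfinal : |x s| ≤ (C₁ + N * ((Real.Gamma α)⁻¹ * (r t t * Jx))) / (1 - N) := by
    rw [le_div_iff₀ h1N]
    nlinarith [hmain]
  have heq : (C₁ + N * ((Real.Gamma α)⁻¹ * (r t t * Jx))) / (1 - N)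
      = C₁ / (1 - N) + N / (1 - N) * r t t * (Real.Gamma α)⁻¹ * Jx := by
    field_simp
  show |x s| ≤ C₁ / (1 - N) + N / (1 - N) * r t t * (Real.Gamma α)⁻¹ * Jx
  rw [← heq]
  exact hfinal
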